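/- arXiv:1603.01859 — 2 statements merged into one kernel-verified Lean document; each statement's English description precedes it below -/
import Mathlib

section
/- Let G be a finite group of order 4t, let ρ be a normalized binary cocycle over G, and let S ⊆ G∖{1} be any subset (indexing the coboundaries of a basis of cocycles). In ℚ[x_d : d ∈ S], let J be the ideal generated by: (i) x_d² − x_d for all d ∈ S, and (ii) for each g ∈ G∖{1}, the polynomial S_g(X) = Σ_{h∈G} ρ(g,h) · ∏_{d ∈ S ∩ {h, g·h}} (1 − 2x_d). Then a point a : S → ℚ lies in the affine variety V(J) if and only if a_d ∈ {0,1} for every d ∈ S and the cocyclic matrix of the cocycle ψ(g,h) = ρ(g,h) · ∏_{d∈S} ∂_d(g,h)^{a_d} is Hadamard. -/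
open Matrix MvPolynomial

/-- The characteristic map `δ_d`. -/
def charMap {G : Type*} [DecidableEq G] (d x : G) : ℤ := if x = d then -1 else 1

/-- The elementary coboundary `∂_d`. -/
def elemCob {G : Type*} [Group G] [DecidableEq G] (d g h : G) : ℤ :=
  charMap d g * charMap d h * charMap d (g * h)

/-- The polynomial `S_g(X) = Σ_{h∈G} ρ(g,h) · ∏_{d ∈ S ∩ {h, g·h}} (1 - 2x_d)`. -/
noncomputable def rowPoly {G : Type*} [Group G] [Fintype G] [DecidableEq G]
    (ρ : G → G → ℤ) (S : Finset G) (g : G) : MvPolynomial {d : G // d ∈ S} ℚ :=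
  ∑ h : G, MvPolynomial.C ((ρ g h : ℤ) : ℚ) *
    ∏ d : {d : G // d ∈ S},
      if (d : G) = h ∨ (d : G) = g * h then (1 - 2 * MvPolynomial.X d) else 1

/-- The ideal `J_G` of Theorem 3 (built from coboundaries indexed by `S`). -/
noncomputable def cocycleIdeal {G : Type*} [Group G] [Fintype G] [DecidableEq G]
    (ρ : G → G → ℤ) (S : Finset G) : Ideal (MvPolynomial {d : G // d ∈ S} ℚ) :=
  Ideal.span
    ({p | ∃ d : {d : G // d ∈ S}, p = MvPolynomial.X d ^ 2 - MvPolynomial.X d} ∪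
     {p | ∃ g : G, g ≠ 1 ∧ p = rowPoly ρ S g})

section AuxCobound

variable {G : Type*} [Group G] [DecidableEq G]

lemma charMap_sq (d x : G) : charMap d x * charMap d x = 1 := by
  unfold charMap; split_ifs <;> norm_num

lemma elemCob_sq (d g h : G) : elemCob d g h * elemCob d g h = 1 := by
  unfold elemCob charMap; split_ifs <;> norm_num

lemma elemCob_cocycle (d g h k : G) :
    elemCob d g h * elemCob d (g * h) k = elemCob d h k * elemCob d g (h * k) := by
  unfold elemCob charMap
  rw [show g * h * k = g * (h * k) from mul_assoc g h k]
  split_ifs <;> ring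

lemma elemCob_one_left (d g : G) (hd : d ≠ 1) : elemCob d 1 g = 1 := by
  simp only [elemCob, charMap, one_mul, if_neg (Ne.symm hd)]
  split_ifs <;> norm_num

lemma fac_eq (g : G) (hg : g ≠ 1) (S : Finset G) (a : {d : G // d ∈ S} → ℚ)
    (ha : ∀ d, a d = 0 ∨ a d = 1) (h : G) (d : {d : G // d ∈ S}) :
    (if a d = 1 then ((charMap (d : G) g : ℤ) : ℚ) else 1) *
      (if (d : G) = h ∨ (d : G) = g * h then 1 - 2 * a d else 1)
    = (if a d = 1 then ((elemCob (d : G) g h : ℤ) : ℚ) else 1) := by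
  have hgh : g * h ≠ h := fun e => hg (mul_eq_right.mp e)
  rcases ha d with h0 | h1
  · simp [h0]
  · rw [if_pos h1, if_pos h1, h1]
    have hor : (if (d : G) = h ∨ (d : G) = g * h then (1 - 2 * 1 : ℚ) else 1)
        = ((if h = (d : G) then -1 else 1) * (if g * h = (d : G) then -1 else 1) : ℤ) := by
      rcases eq_or_ne h (d : G) with e1 | e1 <;> rcases eq_or_ne (g * h) (d : G) with e2 | e2
      · exact absurd (e2.trans e1.symm) hgh
      · rw [if_pos (Or.inl e1.symm), if_pos e1, if_neg e2]; norm_num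
      · rw [if_pos (Or.inr e2.symm), if_neg e1, if_pos e2]; norm_num
      · rw [if_neg (not_or.mpr ⟨fun e => e1 e.symm, fun e => e2 e.symm⟩), if_neg e1, if_neg e2]
        norm_num
    rw [hor]
    show ((charMap (d : G) g : ℤ) : ℚ) * _ = _
    rw [← Int.cast_mul]
    congr 1
    simp only [elemCob, charMap, mul_assoc]

end AuxCobound

section AuxHadamard

variable {G : Type*} [Group G] [Fintype G] [DecidableEq G]

lemma row_pair (ψ : G → G → ℤ) (hsq : ∀ g h, ψ g h * ψ g h = 1)
    (hcoc : ∀ g h k, ψ g h * ψ (g * h) k = ψ h k * ψ g (h * k)) (g g' h : G) :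
    ψ g h * ψ g' h = ψ (g * g'⁻¹) g' * ψ (g * g'⁻¹) (g' * h) := by
  have h1 := hcoc (g * g'⁻¹) g' h
  rw [inv_mul_cancel_right] at h1
  have h2 := hsq g' h
  have h3 := hsq (g * g'⁻¹) g'
  linear_combination (ψ (g * g'⁻¹) g' * ψ g' h) * h1 - (ψ g h * ψ g' h) * h3 +
    (ψ (g * g'⁻¹) g' * ψ (g * g'⁻¹) (g' * h)) * h2

lemma entry_eq (ψ : G → G → ℤ) (hsq : ∀ g h, ψ g h * ψ g h = 1)
    (hcoc : ∀ g h k, ψ g h * ψ (g * h) k = ψ h k * ψ g (h * k)) (g g' : G) :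
    ∑ h : G, ψ g h * ψ g' h = ψ (g * g'⁻¹) g' * ∑ h : G, ψ (g * g'⁻¹) h := by
  calc ∑ h : G, ψ g h * ψ g' h
      = ∑ h : G, ψ (g * g'⁻¹) g' * ψ (g * g'⁻¹) (g' * h) :=
        Finset.sum_congr rfl fun h _ => row_pair ψ hsq hcoc g g' h
    _ = ψ (g * g'⁻¹) g' * ∑ h : G, ψ (g * g'⁻¹) (g' * h) := by rw [Finset.mul_sum]
    _ = ψ (g * g'⁻¹) g' * ∑ h : G, ψ (g * g'⁻¹) h := by
        congr 1
        exact Fintype.sum_bijective (g' * ·) (Group.mulLeft_bijective g') _ _ (fun x => rfl)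

lemma hadamard_iff_rowsums (ψ : G → G → ℤ) (hsq : ∀ g h, ψ g h * ψ g h = 1)
    (hcoc : ∀ g h k, ψ g h * ψ (g * h) k = ψ h k * ψ g (h * k))
    (hone : ∀ g, ψ 1 g = 1) (n : ℤ) (hn : (Fintype.card G : ℤ) = n) :
    (Matrix.of ψ) * (Matrix.of ψ)ᵀ = n • (1 : Matrix G G ℤ) ↔
      ∀ g : G, g ≠ 1 → ∑ h : G, ψ g h = 0 := by
  constructor
  · intro H g hg
    have h1 := congrFun (congrFun H g) 1
    rw [Matrix.mul_apply] at h1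
    simp only [Matrix.transpose_apply, Matrix.of_apply, hone, mul_one, Matrix.smul_apply,
      Matrix.one_apply, if_neg hg, smul_zero] at h1
    exact h1
  · intro H
    ext i j
    rw [Matrix.mul_apply]
    simp only [Matrix.transpose_apply, Matrix.of_apply, Matrix.smul_apply, Matrix.one_apply]
    rw [entry_eq ψ hsq hcoc i j]
    rcases eq_or_ne i j with rfl | hij
    · rw [mul_inv_cancel]
      simp [hone, hn]
    · have hu : i * j⁻¹ ≠ 1 := by
        intro hc
        exact hij (by rwa [mul_inv_eq_one] at hc)
      rw [H _ hu, mul_zero, if_neg hij, smul_zero]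

end AuxHadamard

/-- The twisted cocycle `ψ = ρ · ∏_{d : a_d = 1} ∂_d`. -/
def psiFun {G : Type*} [Group G] [Fintype G] [DecidableEq G]
    (ρ : G → G → ℤ) (S : Finset G) (a : {d : G // d ∈ S} → ℚ) (g h : G) : ℤ :=
  ρ g h * ∏ d : {d : G // d ∈ S}, (if a d = 1 then elemCob (d : G) g h else 1)

section AuxPsi

variable {G : Type*} [Group G] [Fintype G] [DecidableEq G]
variable (ρ : G → G → ℤ) (S : Finset G) (a : {d : G // d ∈ S} → ℚ)

lemma psiFun_sq (hpm : ∀ g h : G, ρ g h = 1 ∨ ρ g h = -1) (g h : G) :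
    psiFun ρ S a g h * psiFun ρ S a g h = 1 := by
  unfold psiFun
  rw [mul_mul_mul_comm, ← Finset.prod_mul_distrib]
  have h1 : ρ g h * ρ g h = 1 := by rcases hpm g h with h' | h' <;> rw [h'] <;> norm_num
  rw [h1, one_mul]
  apply Finset.prod_eq_one
  intro d _
  by_cases hd : a d = 1 <;> simp [hd, elemCob_sq]

lemma psiFun_cocycle (hcoc : ∀ g h k : G, ρ g h * ρ (g * h) k = ρ h k * ρ g (h * k))
    (g h k : G) :
    psiFun ρ S a g h * psiFun ρ S a (g * h) k =
      psiFun ρ S a h k * psiFun ρ S a g (h * k) := by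
  unfold psiFun
  rw [mul_mul_mul_comm, mul_mul_mul_comm (ρ h k), ← Finset.prod_mul_distrib,
    ← Finset.prod_mul_distrib, hcoc]
  congr 1
  apply Finset.prod_congr rfl
  intro d _
  by_cases hd : a d = 1 <;> simp [hd, elemCob_cocycle]

lemma psiFun_one (hnorm : ∀ g : G, ρ 1 g = 1 ∧ ρ g 1 = 1) (hS : (1 : G) ∉ S) (g : G) :
    psiFun ρ S a 1 g = 1 := by
  unfold psiFun
  rw [(hnorm g).1, one_mul]
  apply Finset.prod_eq_one
  intro d _
  have hd1 : (d : G) ≠ 1 := fun e => hS (e ▸ d.2)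
  by_cases hd : a d = 1 <;> simp [hd, elemCob_one_left _ _ hd1]

lemma eval_rowPoly (g : G) :
    eval a (rowPoly ρ S g) = ∑ h : G, ((ρ g h : ℤ) : ℚ) *
      ∏ d : {d : G // d ∈ S}, (if (d : G) = h ∨ (d : G) = g * h then 1 - 2 * a d else 1) := by
  simp [rowPoly, apply_ite (eval a), eval_X]

lemma eval_rowPoly_eq_zero_iff (ha : ∀ d, a d = 0 ∨ a d = 1) (g : G) (hg : g ≠ 1) :
    eval a (rowPoly ρ S g) = 0 ↔ ∑ h : G, psiFun ρ S a g h = 0 := by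
  set cg : ℚ := ∏ d : {d : G // d ∈ S}, (if a d = 1 then ((charMap (d : G) g : ℤ) : ℚ) else 1)
    with hcg
  have hcg2 : cg * cg = 1 := by
    rw [hcg, ← Finset.prod_mul_distrib]
    apply Finset.prod_eq_one
    intro d _
    by_cases hd : a d = 1 <;> simp [hd, ← Int.cast_mul, charMap_sq]
  have hkey : cg * eval a (rowPoly ρ S g) = ((∑ h : G, psiFun ρ S a g h : ℤ) : ℚ) := by
    rw [eval_rowPoly, Finset.mul_sum]
    push_cast
    apply Finset.sum_congr rfl
    intro h _
    rw [mul_left_comm, hcg, ← Finset.prod_mul_distrib]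
    have hcong : ∀ d : {d : G // d ∈ S}, d ∈ Finset.univ →
        (if a d = 1 then ((charMap (d : G) g : ℤ) : ℚ) else 1) *
          (if (d : G) = h ∨ (d : G) = g * h then 1 - 2 * a d else 1)
        = (if a d = 1 then ((elemCob (d : G) g h : ℤ) : ℚ) else 1) :=
      fun d _ => fac_eq g hg S a ha h d
    rw [Finset.prod_congr rfl hcong]
    unfold psiFun
    push_cast [apply_ite (fun z : ℤ => (z : ℚ))]
    ring
  have hcgne : cg ≠ 0 := left_ne_zero_of_mul_eq_one hcg2
  constructor
  · intro h0
    have : ((∑ h : G, psiFun ρ S a g h : ℤ) : ℚ) = 0 := by rw [← hkey, h0, mul_zero]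
    exact_mod_cast this
  · intro h0
    have : cg * eval a (rowPoly ρ S g) = 0 := by rw [hkey, h0]; norm_num
    exact (mul_eq_zero.mp this).resolve_left hcgne

end AuxPsi

/-- a point lies in `V(J)` iff it is a `{0,1}`-tuple such that the
corresponding cocyclic matrix `M_ψ`, `ψ = ρ·∏_{d∈S} ∂_d^{a_d}`, is Hadamard. -/
theorem mem_variety_cocycleIdeal_iff {G : Type*} [Group G] [Fintype G] [DecidableEq G]
    (t : ℕ) (hcard : Fintype.card G = 4 * t)
    (ρ : G → G → ℤ)
    (hpm : ∀ g h : G, ρ g h = 1 ∨ ρ g h = -1)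
    (hcoc : ∀ g h k : G, ρ g h * ρ (g * h) k = ρ h k * ρ g (h * k))
    (hnorm : ∀ g : G, ρ 1 g = 1 ∧ ρ g 1 = 1)
    (S : Finset G) (hS : (1 : G) ∉ S)
    (a : {d : G // d ∈ S} → ℚ) :
    (∀ p ∈ cocycleIdeal ρ S, eval a p = 0) ↔
      (∀ d, a d = 0 ∨ a d = 1) ∧
      (Matrix.of fun g h : G =>
            ρ g h * ∏ d : {d : G // d ∈ S}, (if a d = 1 then elemCob (d : G) g h else 1)) *
          (Matrix.of fun g h : G =>
            ρ g h * ∏ d : {d : G // d ∈ S}, (if a d = 1 then elemCob (d : G) g h else 1))ᵀ =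
        (4 * t : ℤ) • (1 : Matrix G G ℤ) := by
  have hpsi : (fun g h : G =>
      ρ g h * ∏ d : {d : G // d ∈ S}, (if a d = 1 then elemCob (d : G) g h else 1))
      = psiFun ρ S a := rfl
  -- membership in the ideal reduces to vanishing on the generators
  have hker : (∀ p ∈ cocycleIdeal ρ S, eval a p = 0) ↔
      ((∀ d, a d ^ 2 - a d = 0) ∧ ∀ g : G, g ≠ 1 → eval a (rowPoly ρ S g) = 0) := by
    constructor
    · intro H
      constructor
      · intro d
        have := H (X d ^ 2 - X d) (Ideal.subset_span (Or.inl ⟨d, rfl⟩))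
        simpa using this
      · intro g hg
        exact H _ (Ideal.subset_span (Or.inr ⟨g, hg, rfl⟩))
    · rintro ⟨h1, h2⟩ p hp
      have hle : cocycleIdeal ρ S ≤ RingHom.ker (eval a) := by
        rw [cocycleIdeal, Ideal.span_le]
        rintro q (⟨d, rfl⟩ | ⟨g, hg, rfl⟩)
        · simpa [RingHom.mem_ker] using h1 d
        · simpa [RingHom.mem_ker] using h2 g hg
      exact hle hp
  have hzo : ∀ d, a d ^ 2 - a d = 0 ↔ (a d = 0 ∨ a d = 1) := by
    intro d
    constructor
    · intro h
      have h' : a d * (a d - 1) = 0 := by linear_combination h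
      rcases mul_eq_zero.mp h' with h'' | h''
      · exact Or.inl h''
      · exact Or.inr (by linarith)
    · rintro (h | h) <;> rw [h] <;> ring
  rw [hker]
  constructor
  · rintro ⟨h1, h2⟩
    have ha : ∀ d, a d = 0 ∨ a d = 1 := fun d => (hzo d).mp (h1 d)
    refine ⟨ha, ?_⟩
    rw [hpsi, hadamard_iff_rowsums (psiFun ρ S a) (psiFun_sq ρ S a hpm)
      (psiFun_cocycle ρ S a hcoc) (psiFun_one ρ S a hnorm hS) (4 * t)
      (by exact_mod_cast hcard)]
    intro g hg
    exact (eval_rowPoly_eq_zero_iff ρ S a ha g hg).mp (h2 g hg)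
  · rintro ⟨ha, hH⟩
    refine ⟨fun d => (hzo d).mpr (ha d), ?_⟩
    intro g hg
    rw [hpsi, hadamard_iff_rowsums (psiFun ρ S a) (psiFun_sq ρ S a hpm)
      (psiFun_cocycle ρ S a hcoc) (psiFun_one ρ S a hnorm hS) (4 * t)
      (by exact_mod_cast hcard)] at hH
    exact (eval_rowPoly_eq_zero_iff ρ S a ha g hg).mpr (hH g hg)
end

section
/- Let G be a finite group of order 4t, let ρ be a normalized binary cocycle over G, let S ⊆ G∖{1}, and let x_d ∈ {0,1} for d ∈ S. Let N be the G × G matrix N(g,h) = ρ(g,h)·∏_{d∈S} M̄_d(g,h)^{x_d} and let M_ψ be the cocyclic matrix of ψ(g,h) = ρ(g,h)·∏_{d∈S} ∂_d(g,h)^{x_d}. Then N is obtained from M_ψ by negating exactly the rows g ∈ S with x_g = 1 (i.e., N(g,h) = (−1)^{x_g}·M_ψ(g,h) if g ∈ S and N(g,h) = M_ψ(g,h) otherwise); consequently, N is a Hadamard matrix if and only if M_ψ is a Hadamard matrix. -/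
open Matrix

/-- The generalized coboundary matrix `M̄_d`: the matrix of `∂_d` with row `d` negated. -/
def genCob {G : Type*} [Group G] [DecidableEq G] (d g h : G) : ℤ :=
  if g = d then -(elemCob d g h) else elemCob d g h

/-- the matrix built from generalized coboundary matrices is obtained from
the cocyclic matrix `M_ψ` by negating exactly the rows `g ∈ S` with `x_g = 1`; hence one
is Hadamard iff the other is. -/
theorem genCob_matrix_vs_cocyclic_matrix {G : Type*} [Group G] [Fintype G] [DecidableEq G]
    (t : ℕ) (hcard : Fintype.card G = 4 * t)
    (ρ : G → G → ℤ)
    (hpm : ∀ g h : G, ρ g h = 1 ∨ ρ g h = -1)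
    (hcoc : ∀ g h k : G, ρ g h * ρ (g * h) k = ρ h k * ρ g (h * k))
    (hnorm : ∀ g : G, ρ 1 g = 1 ∧ ρ g 1 = 1)
    (S : Finset G) (hS : (1 : G) ∉ S)
    (x : G → ℕ) (hx : ∀ d, x d = 0 ∨ x d = 1)
    (N M : Matrix G G ℤ)
    (hN : N = Matrix.of fun g h : G => ρ g h * ∏ d ∈ S, genCob d g h ^ x d)
    (hM : M = Matrix.of fun g h : G => ρ g h * ∏ d ∈ S, elemCob d g h ^ x d) :
    (∀ g h : G, N g h = (if g ∈ S then (-1 : ℤ) ^ x g else 1) * M g h) ∧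
      (N * Nᵀ = (4 * t : ℤ) • (1 : Matrix G G ℤ) ↔
        M * Mᵀ = (4 * t : ℤ) • (1 : Matrix G G ℤ)) := by
  set ε : G → ℤ := fun g => if g ∈ S then (-1 : ℤ) ^ x g else 1 with hεdef
  have hgen : ∀ d g h : G, genCob d g h = (if g = d then (-1 : ℤ) else 1) * elemCob d g h := by
    intro d g h
    unfold genCob
    split <;> ring
  have hind : ∀ g : G, (∏ d ∈ S, (if g = d then (-1 : ℤ) else 1) ^ x d) = ε g := by
    intro g
    simp only [hεdef]
    split
    · next hg =>
      rw [Finset.prod_eq_single_of_mem g hg]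
      · simp
      · intro d _ hd
        rw [if_neg (fun h => hd h.symm), one_pow]
    · next hg =>
      rw [Finset.prod_eq_one]
      intro d hd
      have : ¬ g = d := fun h => hg (h ▸ hd)
      rw [if_neg this, one_pow]
  have hNe : ∀ g h : G, N g h = ε g * M g h := by
    intro g h
    rw [hN, hM]
    simp only [of_apply]
    have : ∏ d ∈ S, genCob d g h ^ x d =
        (∏ d ∈ S, (if g = d then (-1 : ℤ) else 1) ^ x d) * ∏ d ∈ S, elemCob d g h ^ x d := by
      rw [← Finset.prod_mul_distrib]
      exact Finset.prod_congr rfl fun d _ => by rw [hgen, mul_pow]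
    rw [this, hind]
    ring
  have hε2 : ∀ g : G, ε g * ε g = 1 := by
    intro g
    simp only [hεdef]
    by_cases hg : g ∈ S
    · rcases hx g with h | h <;> simp [hg, h]
    · simp [hg]
  have hNM : ∀ g h : G, (N * Nᵀ) g h = ε g * ε h * ((M * Mᵀ) g h) := by
    intro g h
    simp only [mul_apply, transpose_apply]
    rw [Finset.mul_sum]
    exact Finset.sum_congr rfl fun k _ => by rw [hNe g k, hNe h k]; ring
  have hMN : ∀ g h : G, (M * Mᵀ) g h = ε g * ε h * ((N * Nᵀ) g h) := by
    intro g h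
    rw [hNM g h]; symm
    calc ε g * ε h * (ε g * ε h * (M * Mᵀ) g h)
        = (ε g * ε g) * ((ε h * ε h) * (M * Mᵀ) g h) := by ring
      _ = (M * Mᵀ) g h := by rw [hε2 g, hε2 h]; ring
  have hfix : ∀ g h : G, ε g * ε h * (((4 * t : ℤ) • (1 : Matrix G G ℤ)) g h)
      = ((4 * t : ℤ) • (1 : Matrix G G ℤ)) g h := by
    intro g h
    by_cases hgh : g = h
    · subst hgh
      simp only [Matrix.smul_apply, one_apply_eq, smul_eq_mul]
      rw [← mul_assoc]
      rw [hε2 g, one_mul]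
    · simp [one_apply_ne hgh]
  refine ⟨hNe, ?_, ?_⟩
  · intro h1
    ext g h'
    rw [hMN g h', h1]
    exact hfix g h'
  · intro h1
    ext g h'
    rw [hNM g h', h1]
    exact hfix g h'
end
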